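/- Let a ∈ 𝔄⁺ be a non-constant sequence such that a ∈ 𝔄̂_{m,p} for some integer m ≥ 1 and some p ∈ (0,∞). Then there exist a unique integer m₀ ≥ 2 and a unique p₀ ∈ (0,∞) such that: (1) for all integers μ ≥ 1 and all q ∈ (0,∞), a ∈ 𝔄̂_{μ,q} if and only if (μ,q) = (k(m₀-1)+1, k·p₀) for some integer k ≥ 1; and (2) for all integers μ ≥ 1 and all q ∈ (0,∞), a ∈ 𝔄_{μ,q} if and only if q = k·p₀ for some integer k ≥ 1 with μ > k(m₀-1). -/

import Mathlib

/-- The `m`-th iterated forward difference of a real sequence, evaluated at `n`: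
`(D^m a)_n = ∑_{k=0}^{m} (-1)^k (m choose k) a_{n+k}`. -/
def Dseq (a : ℕ → ℝ) (m n : ℕ) : ℝ :=
  ∑ k ∈ Finset.range (m + 1), (-1 : ℝ) ^ k * (m.choose k : ℝ) * a (n + k)

/-- `a ∈ 𝔄_{m,p}`: a nonnegative sequence with `D^m (a^p) = 0`. -/
def MemA (a : ℕ → ℝ) (m : ℕ) (p : ℝ) : Prop :=
  (∀ n, 0 ≤ a n) ∧ ∀ n, Dseq (fun j => a j ^ p) m n = 0

/-- `a ∈ 𝔄̂_{m,p}`: `a ∈ 𝔄_{m,p}` and `D^{m-1} (a^p) ≠ 0`. -/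
def MemAhat (a : ℕ → ℝ) (m : ℕ) (p : ℝ) : Prop :=
  MemA a m p ∧ ¬ ∀ n, Dseq (fun j => a j ^ p) (m - 1) n = 0

open Polynomial Filter Asymptotics fwdDiff Finset

lemma natc_lt {k m : ℕ} : (k : WithBot ℕ) < (m : WithBot ℕ) ↔ k < m := by
  rw [Nat.cast_withBot, Nat.cast_withBot]; exact WithBot.coe_lt_coe

lemma natc_bot_lt (m : ℕ) : (⊥ : WithBot ℕ) < (m : WithBot ℕ) := by
  rw [Nat.cast_withBot]; exact WithBot.bot_lt_coe m

lemma withbot_lt_succ {x : WithBot ℕ} {m : ℕ} : x < ((m+1 : ℕ) : WithBot ℕ) ↔ x ≤ (m : WithBot ℕ) := by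
  cases x with
  | bot => simp only [bot_le, iff_true]; exact_mod_cast WithBot.bot_lt_coe (m+1)
  | coe n =>
    rw [Nat.cast_withBot, Nat.cast_withBot, WithBot.coe_lt_coe, WithBot.coe_le_coe]
    exact Nat.lt_add_one_iff

lemma dseq_eq_fwdDiff (b : ℕ → ℝ) (m n : ℕ) :
    Dseq b m n = (-1 : ℝ) ^ m * ((Δ_[1])^[m] b n) := by
  rw [fwdDiff_iter_eq_sum_shift, Finset.mul_sum]
  refine Finset.sum_congr rfl fun k hk => ?_
  have hk' : k ≤ m := Nat.lt_succ_iff.mp (Finset.mem_range.mp hk)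
  have h1 : ((-1 : ℤ) ^ (m - k) * (m.choose k : ℤ)) • b (n + k • 1)
      = ((-1:ℝ) ^ (m-k) * (m.choose k : ℝ)) * b (n + k) := by
    rw [zsmul_eq_mul]; push_cast; rw [smul_eq_mul, mul_one]
  rw [h1]
  have h2 : ((-1:ℝ))^m = (-1:ℝ)^(m-k) * (-1:ℝ)^k := by
    rw [← pow_add, Nat.sub_add_cancel hk']
  have h3 : ((-1:ℝ))^(m-k) * (-1:ℝ)^(m-k) = 1 := by
    rw [← pow_add]; exact Even.neg_one_pow ⟨m - k, by ring⟩
  rw [h2]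
  linear_combination (-((-1:ℝ)^k * (m.choose k : ℝ) * b (n + k))) * h3

lemma dseq_zero_iff_fwd (b : ℕ → ℝ) (m : ℕ) :
    (∀ n, Dseq b m n = 0) ↔ (∀ n, (Δ_[1])^[m] b n = 0) := by
  constructor <;> intro h n <;> have := h n <;> rw [dseq_eq_fwdDiff] at *
  · have hne : ((-1:ℝ))^m ≠ 0 := by positivity
    field_simp at this; exact (mul_eq_zero.mp this).resolve_left hne
  · rw [this, mul_zero]

lemma fwdDiff_zero_fun : Δ_[(1:ℕ)] (fun _ : ℕ => (0:ℝ)) = fun _ => 0 := fwdDiff_const 1 0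

lemma fwd_of_poly (R : ℝ[X]) (n : ℕ) :
    Δ_[1] (fun j : ℕ => R.eval (j:ℝ)) n = (R.comp (X + 1) - R).eval (n:ℝ) := by
  simp only [fwdDiff, eval_sub, eval_comp, eval_add, eval_X, eval_one]
  push_cast
  ring_nf

lemma degree_comp_sub_lt (R : ℝ[X]) (hR : 0 < R.degree) :
    (R.comp (X + 1) - R).degree < R.degree := by
  have hR0 : R ≠ 0 := fun h => by simp [h] at hR
  have hq : (X + 1 : ℝ[X]) = X + C 1 := by simp
  have hqd : (X + 1 : ℝ[X]).natDegree = 1 := by rw [hq]; exact natDegree_X_add_C 1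
  have hlc : (R.comp (X + 1)).leadingCoeff = R.leadingCoeff := by
    rw [leadingCoeff_comp (by rw [hqd]; norm_num)]
    rw [hq, (monic_X_add_C (1:ℝ)).leadingCoeff, one_pow, mul_one]
  have hcomp0 : R.comp (X + 1) ≠ 0 := by
    intro h
    apply hR0
    rw [← leadingCoeff_eq_zero, ← hlc, h, leadingCoeff_zero]
  have hdeg : (R.comp (X + 1)).degree = R.degree := by
    rw [degree_eq_natDegree hcomp0, degree_eq_natDegree hR0, natDegree_comp, hqd, mul_one]
  rw [← hdeg]
  exact degree_sub_lt hdeg hcomp0 hlc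

lemma poly_fwd_zero (m : ℕ) (R : ℝ[X]) (hdeg : R.degree < (m : WithBot ℕ)) :
    ∀ n, (Δ_[1])^[m] (fun j : ℕ => R.eval (j:ℝ)) n = 0 := by
  induction m generalizing R with
  | zero =>
    intro n
    have : R = 0 := by
      rw [← degree_eq_bot]
      exact Nat.WithBot.lt_zero_iff.mp (by exact_mod_cast hdeg)
    simp [this]
  | succ m ih =>
    intro n
    rw [Function.iterate_succ_apply]
    have hstep : Δ_[1] (fun j : ℕ => R.eval (j:ℝ)) = fun j : ℕ => (R.comp (X+1) - R).eval (j:ℝ) :=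
      funext (fwd_of_poly R)
    rw [hstep]
    apply ih
    rcases le_or_gt R.degree 0 with h0 | h0
    · obtain ⟨c, rfl⟩ : ∃ c, R = C c := ⟨R.coeff 0, eq_C_of_degree_le_zero h0⟩
      simp only [C_comp, sub_self, degree_zero]
      exact WithBot.bot_lt_coe m
    · exact lt_of_lt_of_le (degree_comp_sub_lt R h0)
        (withbot_lt_succ.mp hdeg)

lemma newton_poly (b : ℕ → ℝ) (m : ℕ) (hz : ∀ n, (Δ_[1])^[m] b n = 0) :
    ∀ n, b n = ∑ k ∈ range m, (n.choose k : ℝ) * ((Δ_[1])^[k] b 0) := by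
  have hzk : ∀ k, m ≤ k → (Δ_[1])^[k] b 0 = 0 := by
    intro k hk
    obtain ⟨j, rfl⟩ := Nat.exists_eq_add_of_le hk
    rw [Nat.add_comm, Function.iterate_add_apply]
    have : (Δ_[1])^[m] b = fun _ => (0:ℝ) := funext hz
    rw [this]
    have : (Δ_[(1:ℕ)])^[j] (fun _ : ℕ => (0:ℝ)) = fun _ => 0 :=
      Function.iterate_fixed fwdDiff_zero_fun j
    rw [this]
  intro n
  have hnewton := shift_eq_sum_fwdDiff_iter (1:ℕ) b n 0
  simp only [smul_eq_mul, mul_one, zero_add] at hnewton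
  rw [hnewton]
  have h1 : ∑ k ∈ range (n+1), n.choose k • (Δ_[1])^[k] b 0
      = ∑ k ∈ range (max (n+1) m), (n.choose k : ℝ) * ((Δ_[1])^[k] b 0) := by
    rw [Finset.sum_subset (Finset.range_subset_range.mpr (le_max_left _ _))]
    · exact Finset.sum_congr rfl fun k _ => by rw [nsmul_eq_mul]
    · intro k _ hk
      rw [Finset.mem_range, not_lt] at hk
      rw [Nat.choose_eq_zero_of_lt hk, zero_smul]
  have h2 : ∑ k ∈ range m, (n.choose k : ℝ) * ((Δ_[1])^[k] b 0)
      = ∑ k ∈ range (max (n+1) m), (n.choose k : ℝ) * ((Δ_[1])^[k] b 0) := by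
    apply Finset.sum_subset (Finset.range_subset_range.mpr (le_max_right _ _))
    intro k _ hk
    rw [Finset.mem_range, not_lt] at hk
    rw [hzk k hk, mul_zero]
  rw [h1, ← h2]

theorem dseq_zero_iff (b : ℕ → ℝ) (m : ℕ) :
    (∀ n, Dseq b m n = 0) ↔ ∃ R : ℝ[X], R.degree < (m : WithBot ℕ) ∧ ∀ n : ℕ, b n = R.eval (n:ℝ) := by
  rw [dseq_zero_iff_fwd]
  constructor
  · intro hz
    refine ⟨∑ k ∈ range m, C ((Δ_[1])^[k] b 0 / k.factorial) * descPochhammer ℝ k, ?_, ?_⟩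
    · apply lt_of_le_of_lt (degree_sum_le _ _)
      rw [Finset.sup_lt_iff (show (⊥:WithBot ℕ) < (m:ℕ) by rw [Nat.cast_withBot]; exact WithBot.bot_lt_coe m)]
      intro k hk
      calc (C ((Δ_[1])^[k] b 0 / ↑k.factorial) * descPochhammer ℝ k).degree
          ≤ (C ((Δ_[1])^[k] b 0 / ↑k.factorial)).degree + (descPochhammer ℝ k).degree :=
            degree_mul_le _ _
        _ ≤ 0 + (k : WithBot ℕ) := add_le_add degree_C_le
            (degree_le_natDegree.trans (by rw [descPochhammer_natDegree]))
        _ = (k : WithBot ℕ) := zero_add _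
        _ < (m : WithBot ℕ) := natc_lt.mpr (Finset.mem_range.mp hk)
    · intro n
      rw [newton_poly b m hz n, eval_finset_sum]
      refine Finset.sum_congr rfl fun k _ => ?_
      rw [eval_mul, eval_C, descPochhammer_eval_eq_descFactorial,
        Nat.descFactorial_eq_factorial_mul_choose]
      have : (k.factorial : ℝ) ≠ 0 := by positivity
      push_cast
      field_simp
  · rintro ⟨R, hdeg, hb⟩ n
    have : b = fun j : ℕ => R.eval (j:ℝ) := funext hb
    rw [this]
    exact poly_fwd_zero m R hdeg n

lemma poly_eq_of_eval_nat {R S : ℝ[X]} (h : ∀ n : ℕ, R.eval (n:ℝ) = S.eval (n:ℝ)) : R = S := by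
  have h0 : R - S = 0 := by
    apply Polynomial.eq_zero_of_infinite_isRoot
    have hsub : Set.range (Nat.cast : ℕ → ℝ) ⊆ {x | (R - S).IsRoot x} := by
      rintro x ⟨n, rfl⟩
      simp [Polynomial.IsRoot, h n]
    exact (Set.infinite_range_of_injective
      (Nat.cast_injective : Function.Injective (Nat.cast : ℕ → ℝ))).mono hsub
  have := sub_eq_zero.mp h0
  exact this

lemma tendsto_eval_div_pow (P : ℝ[X]) (hP : P ≠ 0) :
    Tendsto (fun n : ℕ => P.eval (n:ℝ) / (n:ℝ) ^ P.natDegree) atTop (nhds P.leadingCoeff) := by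
  have hlc : P.leadingCoeff ≠ 0 := leadingCoeff_ne_zero.mpr hP
  have hequiv := Polynomial.isEquivalent_atTop_lead P
  have hz : ∀ᶠ x : ℝ in atTop, P.leadingCoeff * x ^ P.natDegree ≠ 0 := by
    filter_upwards [eventually_gt_atTop 0] with x hx
    positivity
  have h1 : Tendsto (fun x : ℝ => P.eval x / (P.leadingCoeff * x ^ P.natDegree)) atTop (nhds 1) := by
    have := (isEquivalent_iff_tendsto_one hz).mp hequiv
    simpa [Pi.div_def] using this
  have h4 := h1.const_mul P.leadingCoeff
  rw [mul_one] at h4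
  have h2 : Tendsto (fun x : ℝ => P.eval x / x ^ P.natDegree) atTop (nhds P.leadingCoeff) := by
    apply h4.congr
    intro x
    rcases eq_or_ne (x ^ P.natDegree) 0 with hx | hx
    · simp [hx]
    · field_simp
  exact h2.comp tendsto_natCast_atTop_atTop

lemma natdeg_of_rpow_eq (P R : ℝ[X]) (hd : 0 < P.natDegree) (hlead : 0 < P.leadingCoeff)
    (hPnn : ∀ n : ℕ, 0 ≤ P.eval (n:ℝ)) (t : ℝ) (ht : 0 < t)
    (hR : ∀ n : ℕ, (P.eval (n:ℝ)) ^ t = R.eval (n:ℝ)) :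
    (R.natDegree : ℝ) = t * P.natDegree := by
  have hP0 : P ≠ 0 := fun h => by simp [h] at hd
  have hPtop : Tendsto (fun n : ℕ => P.eval (n:ℝ)) atTop atTop :=
    (Polynomial.tendsto_atTop_of_leadingCoeff_nonneg P
      (natDegree_pos_iff_degree_pos.mp hd) hlead.le).comp tendsto_natCast_atTop_atTop
  have hev : ∀ᶠ n : ℕ in atTop, 0 < P.eval (n:ℝ) := hPtop.eventually_gt_atTop 0
  have hR0 : R ≠ 0 := by
    obtain ⟨n, hn⟩ := hev.exists
    intro h
    have := hR n
    rw [h] at this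
    simp only [eval_zero] at this
    exact absurd this (ne_of_gt (Real.rpow_pos_of_pos hn t))
  set d := P.natDegree
  set d' := R.natDegree
  have hA : Tendsto (fun n : ℕ => P.eval (n:ℝ) / (n:ℝ) ^ d) atTop (nhds P.leadingCoeff) :=
    tendsto_eval_div_pow P hP0
  have hB : Tendsto (fun n : ℕ => (P.eval (n:ℝ) / (n:ℝ) ^ d) ^ t) atTop
      (nhds (P.leadingCoeff ^ t)) :=
    ((Real.continuousAt_rpow_const P.leadingCoeff t (Or.inl (ne_of_gt hlead))).tendsto).comp hA
  have hC : Tendsto (fun n : ℕ => R.eval (n:ℝ) / (n:ℝ) ^ ((d:ℝ) * t)) atTop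
      (nhds (P.leadingCoeff ^ t)) := by
    apply hB.congr'
    filter_upwards [eventually_ge_atTop 1] with n hn
    have hn0 : (0:ℝ) ≤ (n:ℝ) := Nat.cast_nonneg n
    rw [Real.div_rpow (hPnn n) (by positivity), hR n, ← Real.rpow_natCast (n:ℝ) d,
      ← Real.rpow_mul hn0]
  have hD : Tendsto (fun n : ℕ => R.eval (n:ℝ) / (n:ℝ) ^ d') atTop (nhds R.leadingCoeff) :=
    tendsto_eval_div_pow R hR0
  have hlct : P.leadingCoeff ^ t ≠ 0 := ne_of_gt (Real.rpow_pos_of_pos hlead t)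
  have hrat : Tendsto (fun n : ℕ => (n:ℝ) ^ ((d:ℝ) * t - (d':ℝ))) atTop
      (nhds (R.leadingCoeff / P.leadingCoeff ^ t)) := by
    apply (hD.div hC hlct).congr'
    filter_upwards [eventually_ge_atTop 1, hev] with n hn hPn
    have hnpos : (0:ℝ) < (n:ℝ) := by exact_mod_cast Nat.lt_of_lt_of_le Nat.zero_lt_one hn
    have hRn : 0 < R.eval (n:ℝ) := by rw [← hR n]; exact Real.rpow_pos_of_pos hPn t
    have hc : (0:ℝ) < (n:ℝ) ^ ((d:ℝ)*t) := Real.rpow_pos_of_pos hnpos _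
    have hb : (0:ℝ) < (n:ℝ) ^ d' := by positivity
    simp only [Pi.div_apply]
    rw [div_div_div_comm, div_self (ne_of_gt hRn), one_div_div, ← Real.rpow_natCast (n:ℝ) d',
      ← Real.rpow_sub hnpos]
  by_contra hne
  have hne' : (d:ℝ) * t - (d':ℝ) ≠ 0 := fun h => hne (by linarith)
  rcases hne'.lt_or_gt with hlt | hgt
  · have h2 : Tendsto (fun n : ℕ => (n:ℝ) ^ ((d:ℝ) * t - (d':ℝ))) atTop (nhds 0) := by
      have := tendsto_rpow_neg_atTop (show (0:ℝ) < (d':ℝ) - (d:ℝ)*t by linarith)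
      rw [neg_sub] at this
      exact this.comp tendsto_natCast_atTop_atTop
    have heq := tendsto_nhds_unique hrat h2
    rcases div_eq_zero_iff.mp heq with h | h
    · exact (leadingCoeff_ne_zero.mpr hR0) h
    · exact hlct h
  · have h2 : Tendsto (fun n : ℕ => (n:ℝ) ^ ((d:ℝ) * t - (d':ℝ))) atTop atTop :=
      (tendsto_rpow_atTop hgt).comp tendsto_natCast_atTop_atTop
    exact absurd h2 (not_tendsto_atTop_of_tendsto_nhds hrat)

/-! ### Part C: the set of exponents -/

/-- `e` is an admissible numerator: `P(n)^(e/d)` is a polynomial sequence. -/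
def Epred (P : Polynomial ℝ) (e : ℕ) : Prop :=
  0 < e ∧ ∃ R : Polynomial ℝ, ∀ n : ℕ,
    P.eval (n:ℝ) ^ ((e:ℝ)/(P.natDegree:ℝ)) = R.eval (n:ℝ)

lemma witness_pow {P : Polynomial ℝ} (hPnn : ∀ n : ℕ, 0 ≤ P.eval (n:ℝ))
    (hd : 0 < P.natDegree) {e : ℕ} {R : Polynomial ℝ}
    (hR : ∀ n : ℕ, P.eval (n:ℝ) ^ ((e:ℝ)/(P.natDegree:ℝ)) = R.eval (n:ℝ)) :
    R ^ P.natDegree = P ^ e := by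
  have hdR : ((P.natDegree : ℕ) : ℝ) ≠ 0 := Nat.cast_ne_zero.mpr hd.ne'
  apply poly_eq_of_eval_nat
  intro n
  rw [eval_pow, eval_pow, ← hR n,
    ← Real.rpow_natCast (P.eval (n:ℝ) ^ ((e:ℝ)/(P.natDegree:ℝ))) P.natDegree,
    ← Real.rpow_mul (hPnn n), div_mul_cancel₀ _ hdR, Real.rpow_natCast]

lemma Epred_add {P : Polynomial ℝ} (hPnn : ∀ n : ℕ, 0 ≤ P.eval (n:ℝ))
    {e₁ e₂ : ℕ} (h1 : Epred P e₁) (h2 : Epred P e₂) : Epred P (e₁ + e₂) := by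
  obtain ⟨he1, R₁, hR₁⟩ := h1
  obtain ⟨he2, R₂, hR₂⟩ := h2
  refine ⟨by omega, R₁ * R₂, fun n => ?_⟩
  rw [eval_mul, ← hR₁ n, ← hR₂ n,
    ← Real.rpow_add_of_nonneg (hPnn n) (by positivity) (by positivity)]
  congr 1
  push_cast
  ring

lemma Epred_sub {P : Polynomial ℝ} (hd : 0 < P.natDegree)
    (hPnn : ∀ n : ℕ, 0 ≤ P.eval (n:ℝ)) {e₁ e₂ : ℕ} (h12 : e₁ < e₂)
    (h1 : Epred P e₁) (h2 : Epred P e₂) : Epred P (e₂ - e₁) := by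
  obtain ⟨he1, R₁, hR₁⟩ := h1
  obtain ⟨he2, R₂, hR₂⟩ := h2
  have hP0 : P ≠ 0 := fun h => by simp [h] at hd
  have hpow1 : R₁ ^ P.natDegree = P ^ e₁ := witness_pow hPnn hd hR₁
  have hpow2 : R₂ ^ P.natDegree = P ^ e₂ := witness_pow hPnn hd hR₂
  have hdvd : R₁ ∣ R₂ := by
    apply (IsIntegrallyClosed.pow_dvd_pow_iff hd.ne').mp
    rw [hpow1, hpow2]
    exact pow_dvd_pow P h12.le
  obtain ⟨U, hU⟩ := hdvd
  have hUpow : U ^ P.natDegree = P ^ (e₂ - e₁) := by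
    have h3 : P ^ e₁ * U ^ P.natDegree = P ^ e₁ * P ^ (e₂ - e₁) := by
      rw [← pow_add, Nat.add_sub_cancel' h12.le, ← hpow1, ← hpow2, hU, mul_pow]
    exact mul_left_cancel₀ (pow_ne_zero _ hP0) h3
  refine ⟨by omega, U, fun n => ?_⟩
  rcases eq_or_lt_of_le (hPnn n) with hz | hpos
  · have hexp : ((e₂ - e₁ : ℕ):ℝ)/(P.natDegree:ℝ) ≠ 0 := by
      apply div_ne_zero
      · exact_mod_cast (by omega : (e₂ - e₁) ≠ 0)
      · exact Nat.cast_ne_zero.mpr hd.ne'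
    rw [← hz, Real.zero_rpow hexp]
    have h4 := congrArg (fun Q : Polynomial ℝ => Q.eval (n:ℝ)) hUpow
    simp only [eval_pow] at h4
    rw [← hz, zero_pow (by omega : e₂ - e₁ ≠ 0)] at h4
    exact ((pow_eq_zero_iff hd.ne').mp h4).symm
  · have hR1n : 0 < R₁.eval (n:ℝ) := by
      rw [← hR₁ n]; exact Real.rpow_pos_of_pos hpos _
    have hUn : U.eval (n:ℝ) = R₂.eval (n:ℝ) / R₁.eval (n:ℝ) := by
      rw [hU, eval_mul]
      field_simp
    rw [hUn, ← hR₁ n, ← hR₂ n, ← Real.rpow_sub hpos]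
    congr 1
    rw [Nat.cast_sub h12.le]
    ring

theorem stmt_9 (a : ℕ → ℝ) (ha : ∀ n, 0 ≤ a n) (hnc : ∃ i j : ℕ, a i ≠ a j)
    (m : ℕ) (hm : 1 ≤ m) (p : ℝ) (hp : 0 < p) (hstrict : MemAhat a m p) :
    ∃! m₀p₀ : ℕ × ℝ, 2 ≤ m₀p₀.1 ∧ 0 < m₀p₀.2 ∧
      (∀ μ : ℕ, 1 ≤ μ → ∀ q : ℝ, 0 < q →
        (MemAhat a μ q ↔ ∃ k : ℕ, 1 ≤ k ∧ μ = k * (m₀p₀.1 - 1) + 1 ∧ q = (k : ℝ) * m₀p₀.2)) ∧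
      (∀ μ : ℕ, 1 ≤ μ → ∀ q : ℝ, 0 < q →
        (MemA a μ q ↔ ∃ k : ℕ, 1 ≤ k ∧ q = (k : ℝ) * m₀p₀.2 ∧ k * (m₀p₀.1 - 1) < μ)) := by
  classical
  obtain ⟨P, hPdeg, hP⟩ := (dseq_zero_iff _ m).mp hstrict.1.2
  clear hPdeg hstrict hm
  have hpne : p ≠ 0 := ne_of_gt hp
  have key : ∀ (q : ℝ) (n : ℕ), a n ^ q = P.eval (n:ℝ) ^ (q / p) := by
    intro q n
    rw [← hP n, ← Real.rpow_mul (ha n)]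
    congr 1
    field_simp
  have hPnn : ∀ n : ℕ, 0 ≤ P.eval (n:ℝ) := fun n => hP n ▸ Real.rpow_nonneg (ha n) p
  have haP : ∀ n : ℕ, a n = P.eval (n:ℝ) ^ (1 / p) := fun n => by
    have h := key 1 n
    rwa [Real.rpow_one] at h
  have hd : 0 < P.natDegree := by
    by_contra hcon
    have h0 : P.natDegree = 0 := by omega
    obtain ⟨i, j, hij⟩ := hnc
    apply hij
    rw [haP i, haP j, Polynomial.eq_C_of_natDegree_eq_zero h0]
    simp
  have hP0 : P ≠ 0 := fun h => by simp [h] at hd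
  have hdR : ((P.natDegree : ℕ) : ℝ) ≠ 0 := Nat.cast_ne_zero.mpr hd.ne'
  have hdRpos : (0:ℝ) < (P.natDegree : ℝ) := by exact_mod_cast hd
  have hlead : 0 < P.leadingCoeff := by
    rcases (Polynomial.leadingCoeff_ne_zero.mpr hP0).lt_or_gt with hneg | hpos
    · exfalso
      have htb := (Polynomial.tendsto_atBot_of_leadingCoeff_nonpos P
        (Polynomial.natDegree_pos_iff_degree_pos.mp hd) hneg.le).comp
          tendsto_natCast_atTop_atTop
      obtain ⟨n, hn⟩ := (htb.eventually_lt_atBot 0).exists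
      exact absurd (hPnn n) (not_le.mpr hn)
    · exact hpos
  -- facts about any rpow witness
  have wfact : ∀ t : ℝ, 0 < t → ∀ R : Polynomial ℝ,
      (∀ n : ℕ, P.eval (n:ℝ) ^ t = R.eval (n:ℝ)) →
      (R.natDegree : ℝ) = t * P.natDegree ∧ R ≠ 0 ∧
        R.degree = (R.natDegree : WithBot ℕ) ∧ 0 < R.natDegree := by
    intro t ht R hR
    have h1 := natdeg_of_rpow_eq P R hd hlead hPnn t ht hR
    have h2 : (0:ℝ) < (R.natDegree : ℝ) := by
      rw [h1]
      exact mul_pos ht hdRpos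
    have hRdpos : 0 < R.natDegree := by exact_mod_cast h2
    have hR0 : R ≠ 0 := fun h => by simp [h] at hRdpos
    exact ⟨h1, hR0, Polynomial.degree_eq_natDegree hR0, hRdpos⟩
  -- the minimal admissible numerator
  have hEself : Epred P P.natDegree :=
    ⟨hd, P, fun n => by rw [div_self hdR, Real.rpow_one]⟩
  have hEex : ∃ e, Epred P e := ⟨_, hEself⟩
  set g := Nat.find hEex with hgdef
  have hEg : Epred P g := Nat.find_spec hEex
  have hgpos : 0 < g := hEg.1
  have hgmin : ∀ e, Epred P e → g ≤ e := fun e he => Nat.find_min' hEex he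
  have hEmul : ∀ e, Epred P e → ∃ k, 1 ≤ k ∧ e = k * g := by
    intro e
    induction e using Nat.strong_induction_on with
    | _ e ih =>
      intro he
      rcases eq_or_lt_of_le (hgmin e he) with heq | hlt
      · exact ⟨1, le_refl 1, by rw [one_mul]; omega⟩
      · obtain ⟨k, hk1, hk2⟩ := ih (e - g) (by omega)
          (Epred_sub hd hPnn hlt hEg he)
        exact ⟨k + 1, by omega, by rw [add_mul, one_mul, ← hk2]; omega⟩
  have hmulE : ∀ k, 1 ≤ k → Epred P (k * g) := by
    intro k hk
    induction k with
    | zero => omega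
    | succ k ih =>
      rcases Nat.eq_zero_or_pos k with h0 | h0
      · rw [h0]
        simpa using hEg
      · rw [add_mul, one_mul]
        exact Epred_add hPnn (ih h0) hEg
  set p₀ : ℝ := (g:ℝ) * p / (P.natDegree:ℝ) with hp₀def
  have hgR : (0:ℝ) < (g:ℝ) := by exact_mod_cast hgpos
  have hp₀pos : 0 < p₀ := by
    rw [hp₀def]
    positivity
  -- characterization of MemA
  have hmemA_iff : ∀ μ : ℕ, ∀ q : ℝ, 0 < q →
      (MemA a μ q ↔ ∃ k : ℕ, 1 ≤ k ∧ q = (k : ℝ) * p₀ ∧ k * g < μ) := by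
    intro μ q hq
    constructor
    · rintro ⟨-, hzero⟩
      obtain ⟨R, hRdeg, hRrep⟩ := (dseq_zero_iff _ μ).mp hzero
      have hRrep' : ∀ n : ℕ, P.eval (n:ℝ) ^ (q/p) = R.eval (n:ℝ) := fun n => by
        rw [← key q n]
        exact (hRrep n).symm ▸ rfl
      have htpos : 0 < q / p := div_pos hq hp
      obtain ⟨hnd, hR0, hdegeq, hRdpos⟩ := wfact _ htpos R hRrep'
      have he : Epred P R.natDegree := by
        refine ⟨hRdpos, R, fun n => ?_⟩
        rw [show ((R.natDegree:ℝ))/(P.natDegree:ℝ) = q/p by rw [hnd]; field_simp]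
        exact hRrep' n
      obtain ⟨k, hk1, hk2⟩ := hEmul _ he
      refine ⟨k, hk1, ?_, ?_⟩
      · have h5 : ((k * g : ℕ):ℝ) = (q/p) * P.natDegree := by
          rw [← hk2]
          exact hnd
        push_cast at h5
        rw [hp₀def]
        field_simp
        field_simp at h5
        linarith
      · rw [hdegeq] at hRdeg
        have := natc_lt.mp hRdeg
        omega
    · rintro ⟨k, hk1, hq2, hklt⟩
      obtain ⟨hkgpos, R, hR⟩ := hmulE k hk1
      have hkgR : (0:ℝ) < ((k * g : ℕ):ℝ) := by exact_mod_cast hkgpos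
      obtain ⟨hnd, hR0, hdegeq, hRdpos⟩ :=
        wfact (((k*g:ℕ):ℝ)/(P.natDegree:ℝ)) (div_pos hkgR hdRpos) R hR
      refine ⟨ha, (dseq_zero_iff _ μ).mpr ⟨R, ?_, fun n => ?_⟩⟩
      · have hRd : R.natDegree = k * g := by
          have h6 : (R.natDegree:ℝ) = ((k*g:ℕ):ℝ) := by
            rw [hnd]
            field_simp
          exact_mod_cast h6
        rw [hdegeq, hRd]
        exact natc_lt.mpr hklt
      · rw [key q n, ← hR n]
        congr 1
        rw [hq2, hp₀def]
        push_cast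
        field_simp
  -- characterization of MemAhat
  have hmemAhat_iff : ∀ μ : ℕ, 1 ≤ μ → ∀ q : ℝ, 0 < q →
      (MemAhat a μ q ↔ ∃ k, 1 ≤ k ∧ μ = k * g + 1 ∧ q = (k:ℝ) * p₀) := by
    intro μ hμ q hq
    constructor
    · rintro ⟨hA, hnz⟩
      obtain ⟨k, hk1, hk2, hk3⟩ := (hmemA_iff μ q hq).mp hA
      refine ⟨k, hk1, ?_, hk2⟩
      by_contra hcon
      have hlt : k * g < μ - 1 := by omega
      exact hnz ((hmemA_iff (μ-1) q hq).mpr ⟨k, hk1, hk2, hlt⟩).2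
    · rintro ⟨k, hk1, hk2, hk3⟩
      constructor
      · exact (hmemA_iff μ q hq).mpr ⟨k, hk1, hk3, by omega⟩
      · intro hzero
        obtain ⟨k', hk'1, hk'2, hk'3⟩ := (hmemA_iff (μ-1) q hq).mp ⟨ha, hzero⟩
        have h7 : (k:ℝ) = (k':ℝ) :=
          mul_right_cancel₀ (ne_of_gt hp₀pos) (hk3.symm.trans hk'2)
        have hkk : k = k' := by exact_mod_cast h7
        rw [← hkk] at hk'3
        omega
  -- assemble
  refine ⟨⟨g + 1, p₀⟩, ⟨by omega, hp₀pos, ?_, ?_⟩, ?_⟩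
  · intro μ hμ q hq
    simpa using hmemAhat_iff μ hμ q hq
  · intro μ hμ q hq
    simpa using hmemA_iff μ q hq
  · rintro ⟨m₁, p₁⟩ ⟨hm₁, hp₁, h1, h2⟩
    simp only at hm₁ hp₁ h1 h2
    have hhat1 : MemAhat a m₁ p₁ :=
      (h1 m₁ (by omega) p₁ hp₁).mpr ⟨1, le_refl 1, by omega, by simp⟩
    obtain ⟨k, hk1, hk2, hk3⟩ := (hmemAhat_iff m₁ (by omega) p₁ hp₁).mp hhat1
    have hhat0 : MemAhat a (g+1) p₀ :=
      (hmemAhat_iff (g+1) (by omega) p₀ hp₀pos).mpr ⟨1, le_refl 1, by omega, by simp⟩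
    obtain ⟨k', hk'1, hk'2, hk'3⟩ := (h1 (g+1) (by omega) p₀ hp₀pos).mp hhat0
    have hm₁1 : m₁ - 1 = k * g := by omega
    rw [hm₁1] at hk'2
    have h6 : k' * (k * g) = g := by omega
    have h8 : (k' * k) * g = 1 * g := by
      rw [one_mul, ← mul_assoc] at *
      omega
    have hkk' : k' * k = 1 := Nat.eq_of_mul_eq_mul_right hgpos h8
    have hke : k = 1 := Nat.dvd_one.mp ⟨k', by rw [← hkk']; ring⟩
    have hmeq : m₁ = g + 1 := by rw [hke, one_mul] at hk2; omega
    have hpeq : p₁ = p₀ := by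
      rw [hk3, hke]
      simp
    rw [hmeq, hpeq]
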